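/- Let Ω ⊆ M_nc be a similarity invariant right admissible nc set and f : Ω → N_nc a nc function. Let ℓ ≥ 0, X^0 ∈ Ω_{n_0}, ..., X^ℓ ∈ Ω_{n_ℓ}, and Z^i ∈ M^{n_{i−1}×n_i} for 1 ≤ i ≤ ℓ. Then B = bidiag(X^0,...,X^ℓ; Z^1,...,Z^ℓ) belongs to Ω_{n_0+···+n_ℓ}, and f(B), written as an (ℓ+1)×(ℓ+1) block matrix with block sizes n_0,...,n_ℓ, is block upper triangular; its (i,i) block equals f(X^{i−1}) for 1 ≤ i ≤ ℓ+1, and for 1 ≤ i < j ≤ ℓ+1 its (i,j) block equals the (1, j−i+1) block of f(bidiag(X^{i−1},...,X^{j−1}; Z^i,...,Z^{j−1})). In particular, the (i,j) block of f(B) depends only on X^{i−1},...,X^{j−1} and Z^i,...,Z^{j−1} (it is the iterated difference-differential Δ_R^{j−i} f(X^{i−1},...,X^{j−1})(Z^i,...,Z^{j−1})). -/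

import Mathlib

open Matrix

/-- Product of a scalar matrix with a matrix over a module. -/
def scalMul {R : Type*} [CommRing R] {M : Type*} [AddCommGroup M] [Module R M]
    {p n m : ℕ} (S : Matrix (Fin p) (Fin n) R) (X : Matrix (Fin n) (Fin m) M) :
    Matrix (Fin p) (Fin m) M :=
  Matrix.of fun i j => ∑ k, S i k • X k j

/-- Product of a matrix over a module with a scalar matrix. -/
def mulScal {R : Type*} [CommRing R] {M : Type*} [AddCommGroup M] [Module R M]
    {n m q : ℕ} (X : Matrix (Fin n) (Fin m) M) (T : Matrix (Fin m) (Fin q) R) :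
    Matrix (Fin n) (Fin q) M :=
  Matrix.of fun i j => ∑ k, T k j • X i k

/-- Direct sum of two square matrices over a module. -/
def dSum {M : Type*} [AddCommGroup M] {n m : ℕ}
    (X : Matrix (Fin n) (Fin n) M) (Y : Matrix (Fin m) (Fin m) M) :
    Matrix (Fin (n + m)) (Fin (n + m)) M :=
  (Matrix.reindex finSumFinEquiv finSumFinEquiv) (Matrix.fromBlocks X 0 0 Y)

/-- Block upper triangular 2×2 block matrix `[[X, Z],[0, Y]]`. -/
def upTri {M : Type*} [AddCommGroup M] {n m : ℕ}
    (X : Matrix (Fin n) (Fin n) M) (Z : Matrix (Fin n) (Fin m) M)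
    (Y : Matrix (Fin m) (Fin m) M) :
    Matrix (Fin (n + m)) (Fin (n + m)) M :=
  (Matrix.reindex finSumFinEquiv finSumFinEquiv) (Matrix.fromBlocks X Z 0 Y)

/-- A noncommutative (nc) set: closed under direct sums. -/
def IsNCSet {M : Type*} [AddCommGroup M]
    (Ω : ∀ n : ℕ, Set (Matrix (Fin n) (Fin n) M)) : Prop :=
  ∀ (n m : ℕ) (X : Matrix (Fin n) (Fin n) M) (Y : Matrix (Fin m) (Fin m) M),
    X ∈ Ω n → Y ∈ Ω m → dSum X Y ∈ Ω (n + m)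

/-- `f` respects direct sums on `Ω`. -/
def RespectsDirSums {M N : Type*} [AddCommGroup M] [AddCommGroup N]
    (Ω : ∀ n : ℕ, Set (Matrix (Fin n) (Fin n) M))
    (f : ∀ n : ℕ, Matrix (Fin n) (Fin n) M → Matrix (Fin n) (Fin n) N) : Prop :=
  ∀ (n m : ℕ) (X : Matrix (Fin n) (Fin n) M) (Y : Matrix (Fin m) (Fin m) M),
    X ∈ Ω n → Y ∈ Ω m → f (n + m) (dSum X Y) = dSum (f n X) (f m Y)

/-- `f` respects similarities on `Ω`. -/
def RespectsSim (R : Type*) [CommRing R] {M N : Type*} [AddCommGroup M] [Module R M]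
    [AddCommGroup N] [Module R N]
    (Ω : ∀ n : ℕ, Set (Matrix (Fin n) (Fin n) M))
    (f : ∀ n : ℕ, Matrix (Fin n) (Fin n) M → Matrix (Fin n) (Fin n) N) : Prop :=
  ∀ (n : ℕ) (X : Matrix (Fin n) (Fin n) M) (S T : Matrix (Fin n) (Fin n) R),
    X ∈ Ω n → S * T = 1 → T * S = 1 → scalMul S (mulScal X T) ∈ Ω n →
    f n (scalMul S (mulScal X T)) = scalMul S (mulScal (f n X) T)

/-- `f` respects intertwining on `Ω`: `X T = T Y` implies `f(X) T = T f(Y)`. -/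
def RespectsIntertwining (R : Type*) [CommRing R] {M N : Type*} [AddCommGroup M]
    [Module R M] [AddCommGroup N] [Module R N]
    (Ω : ∀ n : ℕ, Set (Matrix (Fin n) (Fin n) M))
    (f : ∀ n : ℕ, Matrix (Fin n) (Fin n) M → Matrix (Fin n) (Fin n) N) : Prop :=
  ∀ (n m : ℕ) (X : Matrix (Fin n) (Fin n) M) (Y : Matrix (Fin m) (Fin m) M)
    (T : Matrix (Fin n) (Fin m) R),
    X ∈ Ω n → Y ∈ Ω m → mulScal X T = scalMul T Y →
    mulScal (f n X) T = scalMul T (f m Y)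

/-- `Ω` is invariant under similarities. -/
def SimInvariant (R : Type*) [CommRing R] {M : Type*} [AddCommGroup M] [Module R M]
    (Ω : ∀ n : ℕ, Set (Matrix (Fin n) (Fin n) M)) : Prop :=
  ∀ (n : ℕ) (X : Matrix (Fin n) (Fin n) M) (S T : Matrix (Fin n) (Fin n) R),
    X ∈ Ω n → S * T = 1 → T * S = 1 → scalMul S (mulScal X T) ∈ Ω n

/-- `Ω` is a right admissible nc set. -/
def RightAdmissible (R : Type*) [CommRing R] {M : Type*} [AddCommGroup M] [Module R M]
    (Ω : ∀ n : ℕ, Set (Matrix (Fin n) (Fin n) M)) : Prop :=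
  ∀ (n m : ℕ) (X : Matrix (Fin n) (Fin n) M) (Y : Matrix (Fin m) (Fin m) M)
    (Z : Matrix (Fin n) (Fin m) M), X ∈ Ω n → Y ∈ Ω m →
    ∃ r : Rˣ, upTri X ((r : R) • Z) Y ∈ Ω (n + m)

/-- The block upper bidiagonal matrix with diagonal blocks `X 0, …, X l` (of sizes
`n 0, …, n l`) and superdiagonal blocks `Z 0, …, Z (l-1)`, indexed by the sigma type. -/
def bidiagS {M : Type*} [Zero M] {l : ℕ} (n : Fin (l + 1) → ℕ)
    (X : ∀ i : Fin (l + 1), Matrix (Fin (n i)) (Fin (n i)) M)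
    (Z : ∀ i : Fin l, Matrix (Fin (n i.castSucc)) (Fin (n i.succ)) M) :
    Matrix ((i : Fin (l + 1)) × Fin (n i)) ((i : Fin (l + 1)) × Fin (n i)) M :=
  Matrix.of fun p q =>
    if h : p.1 = q.1 then X p.1 p.2 (Fin.cast (congrArg n h.symm) q.2)
    else if h2 : (p.1 : ℕ) + 1 = (q.1 : ℕ) then
      Z ⟨(p.1 : ℕ), by have := q.1.isLt; omega⟩
        (Fin.cast (by apply congrArg n; apply Fin.ext; simp) p.2)
        (Fin.cast (by apply congrArg n; apply Fin.ext; simp; omega) q.2)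
    else 0

/-- A fixed identification of the sigma type with `Fin (∑ i, n i)`. -/
noncomputable def sigmaFin {l : ℕ} (n : Fin l → ℕ) :
    ((i : Fin l) × Fin (n i)) ≃ Fin (∑ i, n i) :=
  Fintype.equivFinOfCardEq (by simp)

/-- The bidiagonal matrix as a square matrix of size `∑ i, n i`. -/
noncomputable def bidiagF {M : Type*} [Zero M] {l : ℕ} (n : Fin (l + 1) → ℕ)
    (X : ∀ i : Fin (l + 1), Matrix (Fin (n i)) (Fin (n i)) M)
    (Z : ∀ i : Fin l, Matrix (Fin (n i.castSucc)) (Fin (n i.succ)) M) :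
    Matrix (Fin (∑ i, n i)) (Fin (∑ i, n i)) M :=
  (Matrix.reindex (sigmaFin n) (sigmaFin n)) (bidiagS n X Z)

/-- The `(a, b)` block of a square matrix of size `∑ i, n i`. -/
noncomputable def blkS {N : Type*} {l : ℕ} (n : Fin (l + 1) → ℕ) (a b : Fin (l + 1))
    (W : Matrix (Fin (∑ i, n i)) (Fin (∑ i, n i)) N) :
    Matrix (Fin (n a)) (Fin (n b)) N :=
  Matrix.of fun p q => W (sigmaFin n ⟨a, p⟩) (sigmaFin n ⟨b, q⟩)

/-- Reindexing of the blocks from `a` to `b` (for `a ≤ b`) used for sub-bidiagonal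
matrices. -/
def subIdx {l : ℕ} {a b : Fin (l + 1)} (hab : (a : ℕ) ≤ (b : ℕ))
    (t : Fin ((b : ℕ) - (a : ℕ) + 1)) : Fin (l + 1) :=
  ⟨(a : ℕ) + (t : ℕ), by have := t.isLt; have := b.isLt; omega⟩
section NCAux

variable {R : Type*} [CommRing R] {M : Type*} [AddCommGroup M] [Module R M]
  {N : Type*} [AddCommGroup N] [Module R N]

/-- General-index version of `scalMul`. -/
def sMul {α β γ : Type*} [Fintype β] (S : Matrix α β R) (X : Matrix β γ M) :
    Matrix α γ M :=
  Matrix.of fun i j => ∑ k, S i k • X k j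

/-- General-index version of `mulScal`. -/
def mSc {α β γ : Type*} [Fintype β] (X : Matrix α β M) (T : Matrix β γ R) :
    Matrix α γ M :=
  Matrix.of fun i j => ∑ k, T k j • X i k

lemma scalMul_eq_sMul {p n m : ℕ} (S : Matrix (Fin p) (Fin n) R)
    (X : Matrix (Fin n) (Fin m) M) : scalMul S X = sMul S X := rfl

lemma mulScal_eq_mSc {n m q : ℕ} (X : Matrix (Fin n) (Fin m) M)
    (T : Matrix (Fin m) (Fin q) R) : mulScal X T = mSc X T := rfl

lemma sMul_apply {α β γ : Type*} [Fintype β] (S : Matrix α β R) (X : Matrix β γ M)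
    (i : α) (j : γ) : sMul S X i j = ∑ k, S i k • X k j := rfl

lemma mSc_apply {α β γ : Type*} [Fintype β] (X : Matrix α β M) (T : Matrix β γ R)
    (i : α) (j : γ) : mSc X T i j = ∑ k, T k j • X i k := rfl

lemma sMul_submatrix {α β γ α' β' γ' : Type*} [Fintype β] [Fintype β']
    (S : Matrix α β R) (X : Matrix β γ M) (ea : α' → α) (eb : β' ≃ β) (ec : γ' → γ) :
    sMul (S.submatrix ea eb) (X.submatrix eb ec) = (sMul S X).submatrix ea ec := by
  ext i j
  simp only [sMul, Matrix.of_apply, Matrix.submatrix_apply]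
  exact Fintype.sum_equiv eb _ _ (fun k => rfl)

lemma mSc_submatrix {α β γ α' β' γ' : Type*} [Fintype β] [Fintype β']
    (X : Matrix α β M) (T : Matrix β γ R) (ea : α' → α) (eb : β' ≃ β) (ec : γ' → γ) :
    mSc (X.submatrix ea eb) (T.submatrix eb ec) = (mSc X T).submatrix ea ec := by
  ext i j
  simp only [mSc, Matrix.of_apply, Matrix.submatrix_apply]
  exact Fintype.sum_equiv eb _ _ (fun k => rfl)

lemma sMul_fromBlocks {α β γ α' β' γ' : Type*} [Fintype β] [Fintype β']
    (A : Matrix α β R) (B : Matrix α β' R) (C : Matrix α' β R) (D : Matrix α' β' R)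
    (X : Matrix β γ M) (Y : Matrix β γ' M) (Z : Matrix β' γ M) (W : Matrix β' γ' M) :
    sMul (Matrix.fromBlocks A B C D) (Matrix.fromBlocks X Y Z W) =
      Matrix.fromBlocks (sMul A X + sMul B Z) (sMul A Y + sMul B W)
        (sMul C X + sMul D Z) (sMul C Y + sMul D W) := by
  ext (i | i) (j | j) <;>
    simp [sMul, Matrix.fromBlocks, Fintype.sum_sum_type]

lemma mSc_fromBlocks {α β γ α' β' γ' : Type*} [Fintype β] [Fintype β']
    (X : Matrix α β M) (Y : Matrix α β' M) (Z : Matrix α' β M) (W : Matrix α' β' M)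
    (A : Matrix β γ R) (B : Matrix β γ' R) (C : Matrix β' γ R) (D : Matrix β' γ' R) :
    mSc (Matrix.fromBlocks X Y Z W) (Matrix.fromBlocks A B C D) =
      Matrix.fromBlocks (mSc X A + mSc Y C) (mSc X B + mSc Y D)
        (mSc Z A + mSc W C) (mSc Z B + mSc W D) := by
  ext (i | i) (j | j) <;>
    simp [mSc, Matrix.fromBlocks, Fintype.sum_sum_type]

lemma sMul_one {α β : Type*} [Fintype α] [DecidableEq α] (X : Matrix α β M) :
    sMul (1 : Matrix α α R) X = X := by
  ext i j; simp [sMul, Matrix.one_apply, ite_smul]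

lemma mSc_one {α β : Type*} [Fintype β] [DecidableEq β] (X : Matrix α β M) :
    mSc X (1 : Matrix β β R) = X := by
  ext i j; simp [mSc, Matrix.one_apply, ite_smul]

lemma sMul_zero {α β γ : Type*} [Fintype β] (S : Matrix α β R) :
    sMul S (0 : Matrix β γ M) = 0 := by
  ext i j; simp [sMul]

lemma zero_sMul {α β γ : Type*} [Fintype β] (X : Matrix β γ M) :
    sMul (0 : Matrix α β R) X = 0 := by
  ext i j; simp [sMul]

lemma mSc_zero {α β γ : Type*} [Fintype β] (X : Matrix α β M) :
    mSc X (0 : Matrix β γ R) = 0 := by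
  ext i j; simp [mSc]

lemma zero_mSc {α β γ : Type*} [Fintype β] (T : Matrix β γ R) :
    mSc (0 : Matrix α β M) T = 0 := by
  ext i j; simp [mSc]

lemma sMul_smul_one {α β : Type*} [Fintype α] [DecidableEq α] (r : R)
    (X : Matrix α β M) : sMul (r • (1 : Matrix α α R)) X = r • X := by
  ext i j
  simp [sMul, Matrix.one_apply, ite_smul, mul_ite, smul_smul]

lemma mSc_smul_one {α β : Type*} [Fintype β] [DecidableEq β] (r : R)
    (X : Matrix α β M) : mSc X (r • (1 : Matrix β β R)) = r • X := by
  ext i j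
  simp [mSc, Matrix.one_apply, ite_smul, mul_ite, smul_smul]

lemma mSc_neg {α β γ : Type*} [Fintype β] (X : Matrix α β M) (T : Matrix β γ R) :
    mSc X (-T) = -(mSc X T) := by
  ext i j; simp [mSc]

lemma mSc_mSc {α β γ δ : Type*} [Fintype β] [Fintype γ] (X : Matrix α β M)
    (T : Matrix β γ R) (T' : Matrix γ δ R) :
    mSc (mSc X T) T' = mSc X (T * T') := by
  ext i j
  simp only [mSc, Matrix.of_apply, Finset.smul_sum, Matrix.mul_apply, Finset.sum_smul]
  rw [Finset.sum_comm]
  congr 1; ext k; congr 1; ext u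
  rw [smul_smul, mul_comm]

lemma mSc_sMul {α β γ δ : Type*} [Fintype β] [Fintype γ] (S : Matrix α β R)
    (X : Matrix β γ M) (T : Matrix γ δ R) :
    mSc (sMul S X) T = sMul S (mSc X T) := by
  ext i j
  simp only [mSc, sMul, Matrix.of_apply, Finset.smul_sum]
  rw [Finset.sum_comm]
  congr 1; ext k; congr 1; ext u
  rw [smul_comm]

end NCAux
section NCAux2

variable {R : Type*} [CommRing R] {M : Type*} [AddCommGroup M] [Module R M]
  {N : Type*} [AddCommGroup N] [Module R N]

lemma sigma_mk_eq_iff {L : ℕ} {m : Fin L → ℕ} {i j : Fin L} {p : Fin (m i)}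
    {q : Fin (m j)} :
    ((⟨i, p⟩ : (x : Fin L) × Fin (m x)) = ⟨j, q⟩) ↔ ((i : ℕ) = (j : ℕ) ∧ (p : ℕ) = (q : ℕ)) := by
  constructor
  · intro h; cases h; exact ⟨rfl, rfl⟩
  · rintro ⟨h1, h2⟩
    have hij : i = j := Fin.ext h1
    subst hij
    have : p = q := Fin.ext h2
    subst this; rfl

lemma sigma_pt {L : ℕ} {m : Fin L → ℕ} {i j : Fin L} {x : Fin (m i)} {y : Fin (m j)}
    (h : (i : ℕ) = (j : ℕ)) (hxy : (x : ℕ) = (y : ℕ)) :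
    ((⟨i, x⟩ : (x : Fin L) × Fin (m x)) = ⟨j, y⟩) := sigma_mk_eq_iff.mpr ⟨h, hxy⟩

lemma sum_indicator_smul {K : ℕ} (V : Fin K → N) (C : Fin K → Prop)
    [DecidablePred C] (w₀ : Fin K) (h : ∀ w, C w ↔ w = w₀) :
    ∑ w, (if C w then (1 : R) else 0) • V w = V w₀ := by
  have h1 : ∀ w, (if C w then (1 : R) else 0) • V w
      = if w = w₀ then V w else 0 := by
    intro w
    by_cases hw : C w
    · rw [if_pos hw, if_pos ((h w).mp hw), one_smul]
    · rw [if_neg hw, if_neg (fun hww => hw ((h w).mpr hww)), zero_smul]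
  rw [Finset.sum_congr rfl (fun w _ => h1 w)]
  simp

lemma sum_indicator_smul_zero {K : ℕ} (V : Fin K → N) (C : Fin K → Prop)
    [DecidablePred C] (h : ∀ w, ¬ C w) :
    ∑ w, (if C w then (1 : R) else 0) • V w = 0 := by
  apply Finset.sum_eq_zero
  intro w _
  rw [if_neg (h w), zero_smul]

/-- nc functions respect intertwinings. -/
theorem intertwine_aux
    (Ω : ∀ n : ℕ, Set (Matrix (Fin n) (Fin n) M))
    (f : ∀ n : ℕ, Matrix (Fin n) (Fin n) M → Matrix (Fin n) (Fin n) N)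
    (hΩ : IsNCSet Ω) (hds : RespectsDirSums Ω f) (hsim : RespectsSim R Ω f) :
    RespectsIntertwining R Ω f := by
  intro n m X Y T hXm hYm hXT
  rw [mulScal_eq_mSc, scalMul_eq_sMul] at hXT
  have hD : dSum X Y ∈ Ω (n + m) := hΩ n m X Y hXm hYm
  set e : (Fin n ⊕ Fin m) ≃ Fin (n + m) := finSumFinEquiv with he
  set S : Matrix (Fin (n + m)) (Fin (n + m)) R :=
    (Matrix.fromBlocks 1 T 0 1).submatrix e.symm e.symm with hS
  set S' : Matrix (Fin (n + m)) (Fin (n + m)) R :=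
    (Matrix.fromBlocks 1 (-T) 0 1).submatrix e.symm e.symm with hS'
  have hSS' : S * S' = 1 := by
    rw [hS, hS', Matrix.submatrix_mul_equiv, Matrix.fromBlocks_multiply]
    simp [Matrix.submatrix_one_equiv]
  have hS'S : S' * S = 1 := by
    rw [hS, hS', Matrix.submatrix_mul_equiv, Matrix.fromBlocks_multiply]
    simp [Matrix.submatrix_one_equiv]
  have hdsum : dSum X Y = (Matrix.fromBlocks X 0 0 Y).submatrix e.symm e.symm := rfl
  have hconj : scalMul S (mulScal (dSum X Y) S') = dSum X Y := by
    rw [scalMul_eq_sMul, mulScal_eq_mSc, hdsum, hS, hS',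
      mSc_submatrix _ _ _ e.symm _, sMul_submatrix _ _ _ e.symm _]
    rw [mSc_fromBlocks, sMul_fromBlocks]
    simp only [mSc_one, mSc_zero, zero_mSc, mSc_neg, hXT, sMul_one, sMul_zero,
      zero_sMul, add_zero, zero_add, neg_zero, neg_add_cancel]
  have hmem : scalMul S (mulScal (dSum X Y) S') ∈ Ω (n + m) := by
    rw [hconj]; exact hD
  have hfD := hsim (n + m) (dSum X Y) S S' hD hSS' hS'S hmem
  rw [hconj] at hfD
  -- hfD : f (dSum X Y) = scalMul S (mulScal (f (dSum X Y)) S')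
  have h2 : mSc (f (n + m) (dSum X Y)) S = sMul S (f (n + m) (dSum X Y)) := by
    conv_lhs => rw [hfD]
    rw [scalMul_eq_sMul, mulScal_eq_mSc, mSc_sMul, mSc_mSc, hS'S, mSc_one]
  rw [hds n m X Y hXm hYm] at h2
  have hdsumf : dSum (f n X) (f m Y) =
      (Matrix.fromBlocks (f n X) 0 0 (f m Y)).submatrix e.symm e.symm := rfl
  rw [hdsumf, hS, mSc_submatrix _ _ _ e.symm _, sMul_submatrix _ _ _ e.symm _,
    mSc_fromBlocks, sMul_fromBlocks] at h2
  rw [mulScal_eq_mSc, scalMul_eq_sMul]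
  ext i j
  have h3 := congrFun (congrFun h2 (e (Sum.inl i))) (e (Sum.inr j))
  simp only [Matrix.submatrix_apply, Equiv.symm_apply_apply] at h3
  simpa [mSc_one, mSc_zero, zero_mSc, sMul_one, sMul_zero, zero_sMul] using h3

/-- Permutation scalar matrix (left version). -/
def permS (R : Type*) [CommRing R] {k : ℕ} (e : Fin k ≃ Fin k) :
    Matrix (Fin k) (Fin k) R :=
  Matrix.of fun i kk => if kk = e i then 1 else 0

/-- Permutation scalar matrix (right version). -/
def permT (R : Type*) [CommRing R] {k : ℕ} (e : Fin k ≃ Fin k) :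
    Matrix (Fin k) (Fin k) R :=
  Matrix.of fun kk j => if kk = e j then 1 else 0

lemma permS_mul_permT {k : ℕ} (e : Fin k ≃ Fin k) :
    (permS R e) * (permT R e) = 1 := by
  ext i j
  simp only [permS, permT, Matrix.mul_apply, Matrix.of_apply, ite_mul, one_mul,
    zero_mul]
  rw [Finset.sum_ite_eq' Finset.univ (e i) (fun kk => if kk = e j then (1:R) else 0)]
  simp [EmbeddingLike.apply_eq_iff_eq, Matrix.one_apply]

lemma permT_mul_permS {k : ℕ} (e : Fin k ≃ Fin k) :
    (permT R e) * (permS R e) = 1 := by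
  ext i j
  simp only [permS, permT, Matrix.mul_apply, Matrix.of_apply]
  have : ∀ kk : Fin k, (if i = e kk then (1:R) else 0) * (if j = e kk then 1 else 0)
      = if kk = e.symm i then (if j = e kk then (1:R) else 0) else 0 := by
    intro kk
    by_cases h : kk = e.symm i
    · subst h; simp
    · rw [if_neg (fun hc => h (by rw [Equiv.eq_symm_apply, ← hc])), zero_mul,
        if_neg h]
  rw [Finset.sum_congr rfl (fun kk _ => this kk), Finset.sum_ite_eq']
  simp [Matrix.one_apply, eq_comm]

/-- Conjugation by a permutation scalar matrix is reindexing. -/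
lemma perm_conj_eq {k : ℕ} (e : Fin k ≃ Fin k) (W : Matrix (Fin k) (Fin k) M) :
    scalMul (permS R e) (mulScal W (permT R e)) = W.submatrix e e := by
  ext i j
  rw [scalMul_eq_sMul, mulScal_eq_mSc]
  simp only [sMul, mSc, permS, permT, Matrix.of_apply, Matrix.submatrix_apply]
  have inner : ∀ kk : Fin k,
      (∑ u, (if u = e j then (1 : R) else 0) • W kk u) = W kk (e j) := by
    intro kk
    exact sum_indicator_smul (R := R) (fun u => W kk u) (fun u => u = e j) (e j)
      (fun w => Iff.rfl)
  rw [Finset.sum_congr rfl (fun kk _ => by rw [inner kk])]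
  exact sum_indicator_smul (R := R) (fun kk => W kk (e j)) (fun kk => kk = e i) (e i)
    (fun w => Iff.rfl)

/-- Transfer of `Ω`-membership along a bijective reindexing. -/
theorem equiv_mem_aux
    (Ω : ∀ n : ℕ, Set (Matrix (Fin n) (Fin n) M))
    (hsi : SimInvariant R Ω)
    {k k' : ℕ} (e : Fin k' ≃ Fin k) (X : Matrix (Fin k) (Fin k) M)
    (hX : X ∈ Ω k) : X.submatrix e e ∈ Ω k' := by
  have hk : k' = k := by
    have := Fintype.card_congr e; simpa using this
  subst hk
  have hmem := hsi k' X (permS R e) (permT R e) hX (permS_mul_permT e)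
    (permT_mul_permS e)
  rw [perm_conj_eq e X] at hmem
  exact hmem

/-- Transfer of `f` along a bijective reindexing. -/
theorem equiv_conj_aux
    (Ω : ∀ n : ℕ, Set (Matrix (Fin n) (Fin n) M))
    (f : ∀ n : ℕ, Matrix (Fin n) (Fin n) M → Matrix (Fin n) (Fin n) N)
    (hsi : SimInvariant R Ω) (hsim : RespectsSim R Ω f)
    {k k' : ℕ} (e : Fin k' ≃ Fin k) (X : Matrix (Fin k) (Fin k) M)
    (hX : X ∈ Ω k) :
    f k' (X.submatrix e e) = (f k X).submatrix e e := by
  have hk : k' = k := by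
    have := Fintype.card_congr e; simpa using this
  subst hk
  have hmem := hsi k' X (permS R e) (permT R e) hX (permS_mul_permT e)
    (permT_mul_permS e)
  have := hsim k' X (permS R e) (permT R e) hX (permS_mul_permT e)
    (permT_mul_permS e) hmem
  rw [perm_conj_eq e X, perm_conj_eq e (f k' X)] at this
  exact this

end NCAux2
section NCAux3

variable {R : Type*} [CommRing R] {M : Type*} [AddCommGroup M] [Module R M]
  {N : Type*} [AddCommGroup N] [Module R N]

/-- Embedding of block indices for a window starting at `a`. -/
def embF {l l' : ℕ} (a : ℕ) (h : a + l' ≤ l) (t : Fin (l' + 1)) : Fin (l + 1) :=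
  ⟨a + t, by have := t.isLt; omega⟩

/-- Embedding of superdiagonal indices for a window starting at `a`. -/
def embZF {l l' : ℕ} (a : ℕ) (h : a + l' ≤ l) (t : Fin l') : Fin l :=
  ⟨a + t, by have := t.isLt; omega⟩

lemma fam2_congr {l : ℕ} {P : Type*} {m k : Fin l → ℕ}
    (F : ∀ i : Fin l, Matrix (Fin (m i)) (Fin (k i)) P) {i j : Fin l} (h : i = j)
    {p : Fin (m i)} {q : Fin (k i)} {p' : Fin (m j)} {q' : Fin (k j)}
    (hp : (p : ℕ) = (p' : ℕ)) (hq : (q : ℕ) = (q' : ℕ)) : F i p q = F j p' q' := by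
  subst h
  rw [show p = p' from Fin.ext hp, show q = q' from Fin.ext hq]

section Core

variable {l l' a : ℕ} (hal : a + l' ≤ l) (n : Fin (l + 1) → ℕ) (n' : Fin (l' + 1) → ℕ)
  (X : ∀ i : Fin (l + 1), Matrix (Fin (n i)) (Fin (n i)) M)
  (Z : ∀ i : Fin l, Matrix (Fin (n i.castSucc)) (Fin (n i.succ)) M)
  (X' : ∀ i : Fin (l' + 1), Matrix (Fin (n' i)) (Fin (n' i)) M)
  (Z' : ∀ i : Fin l', Matrix (Fin (n' i.castSucc)) (Fin (n' i.succ)) M)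

lemma core1 (hn : ∀ t, n' t = n (embF a hal t))
    (hX' : ∀ t p q, X' t p q = X (embF a hal t) (Fin.cast (hn t) p) (Fin.cast (hn t) q))
    (hZ' : ∀ (t : Fin l') p q, Z' t p q =
      Z (embZF a hal t) (Fin.cast (hn t.castSucc) p) (Fin.cast (hn t.succ) q))
    (s t : Fin (l' + 1)) (p : Fin (n' s)) (q : Fin (n' t)) :
    bidiagS n X Z ⟨embF a hal s, Fin.cast (hn s) p⟩ ⟨embF a hal t, Fin.cast (hn t) q⟩
      = bidiagS n' X' Z' ⟨s, p⟩ ⟨t, q⟩ := by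
  simp only [bidiagS, Matrix.of_apply]
  by_cases h : s = t
  · subst h
    rw [dif_pos rfl, dif_pos rfl, hX']
    exact fam2_congr X rfl (by simp) (by simp)
  · have hne : embF a hal s ≠ embF a hal t := by
      intro hc
      exact h (Fin.ext (by
        have := congrArg Fin.val hc
        simp only [embF] at this
        omega))
    rw [dif_neg hne, dif_neg h]
    by_cases h2 : (s : ℕ) + 1 = (t : ℕ)
    · have h2' : ((embF a hal s : Fin (l + 1)) : ℕ) + 1 = ((embF a hal t) : ℕ) := by
        simp only [embF]; omega
      rw [dif_pos h2', dif_pos h2, hZ']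
      exact fam2_congr Z (Fin.ext (by simp [embF, embZF])) rfl rfl
    · have h2'' : ¬((embF a hal s : Fin (l + 1)) : ℕ) + 1 = ((embF a hal t) : ℕ) := by
        simp only [embF]; omega
      rw [dif_neg h2'', dif_neg h2]

lemma core2 {j : Fin (l + 1)} (hj : (j : ℕ) < a) (s : Fin (l' + 1))
    (x : Fin (n (embF a hal s))) (y : Fin (n j)) :
    bidiagS n X Z ⟨embF a hal s, x⟩ ⟨j, y⟩ = 0 := by
  simp only [bidiagS, Matrix.of_apply]
  rw [dif_neg, dif_neg]
  · show ¬((embF a hal s : Fin (l + 1)) : ℕ) + 1 = (j : ℕ)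
    simp only [embF]; omega
  · intro hc
    have := congrArg Fin.val hc
    simp only [embF] at this
    omega

lemma core3 {i : Fin (l + 1)} (hi : a + l' < (i : ℕ)) (t : Fin (l' + 1))
    (x : Fin (n i)) (y : Fin (n (embF a hal t))) :
    bidiagS n X Z ⟨i, x⟩ ⟨embF a hal t, y⟩ = 0 := by
  simp only [bidiagS, Matrix.of_apply]
  rw [dif_neg, dif_neg]
  · show ¬(i : ℕ) + 1 = ((embF a hal t : Fin (l + 1)) : ℕ)
    simp only [embF]
    have := t.isLt
    omega
  · intro hc
    have := congrArg Fin.val hc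
    simp only [embF] at this
    have := t.isLt
    omega

end Core
end NCAux3
section NCAux4

variable {R : Type*} [CommRing R] {M : Type*} [AddCommGroup M] [Module R M]
  {N : Type*} [AddCommGroup N] [Module R N]

/-- The sigma type over `Fin 1` is just the fiber at `0`. -/
def sigmaOne {n : Fin 1 → ℕ} : ((i : Fin 1) × Fin (n i)) ≃ Fin (n 0) where
  toFun u := Fin.cast (congrArg n (Subsingleton.elim u.1 0)) u.2
  invFun x := ⟨0, x⟩
  left_inv := by
    rintro ⟨i, x⟩
    have hi : i = 0 := Subsingleton.elim i 0
    subst hi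
    rfl
  right_inv := fun x => rfl

/-- Splitting off the first block of a sigma type over `Fin (l+2)`. -/
def splitSig {l : ℕ} (n : Fin (l + 2) → ℕ) :
    ((i : Fin (l + 2)) × Fin (n i)) ≃
      (Fin (n 0) ⊕ ((i : Fin (l + 1)) × Fin (n i.succ))) where
  toFun u :=
    if h : (u.1 : ℕ) = 0 then
      Sum.inl (Fin.cast (congrArg n (Fin.ext h : u.1 = 0)) u.2)
    else
      Sum.inr ⟨⟨(u.1 : ℕ) - 1, by have := u.1.isLt; omega⟩,
        Fin.cast (congrArg n (Fin.ext (by simp; omega))) u.2⟩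
  invFun v := Sum.elim (fun x => ⟨0, x⟩) (fun w => ⟨w.1.succ, w.2⟩) v
  left_inv := by
    rintro ⟨i, x⟩
    dsimp only
    by_cases h : (i : ℕ) = 0
    · rw [dif_pos h]
      exact sigma_pt (by simp [h]) (by simp)
    · rw [dif_neg h]
      exact sigma_pt (by simp; omega) (by simp)
  right_inv := by
    rintro (x | ⟨j, y⟩) <;> dsimp only [Sum.elim_inl, Sum.elim_inr]
    · rw [dif_pos (show ((0 : Fin (l+2)) : ℕ) = 0 from rfl)]
      rfl
    · rw [dif_neg (show ¬ ((j.succ : Fin (l+2)) : ℕ) = 0 by simp)]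
      congr 1

section Step

variable {l : ℕ} (n : Fin (l + 2) → ℕ)
  (X : ∀ i : Fin (l + 2), Matrix (Fin (n i)) (Fin (n i)) M)
  (Z : ∀ i : Fin (l + 1), Matrix (Fin (n i.castSucc)) (Fin (n i.succ)) M)

/-- The top block row of the bidiagonal matrix, sigma-indexed. -/
def hatZS : Matrix (Fin (n 0)) ((i : Fin (l + 1)) × Fin (n i.succ)) M :=
  Matrix.of fun p w =>
    if h : w.1 = (0 : Fin (l + 1)) then
      Z 0 p (Fin.cast (congrArg (fun i : Fin (l+1) => n i.succ) h) w.2)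
    else 0

lemma bidiagS_split (u v : (i : Fin (l + 2)) × Fin (n i)) :
    bidiagS n X Z u v =
      Matrix.fromBlocks (X 0) (hatZS n Z) 0
        (bidiagS (fun i => n i.succ) (fun i => X i.succ) (fun i => Z i.succ))
        (splitSig n u) (splitSig n v) := by
  obtain ⟨i, x⟩ := u
  obtain ⟨j, y⟩ := v
  simp only [bidiagS, splitSig, hatZS, Matrix.of_apply, Equiv.coe_fn_mk]
  by_cases hi : (i : ℕ) = 0 <;> by_cases hj : (j : ℕ) = 0
  · rw [dif_pos hi, dif_pos hj]
    simp only [Matrix.fromBlocks_apply₁₁]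
    rw [dif_pos (show i = j from Fin.ext (by omega))]
    exact fam2_congr X (Fin.ext (by simpa using hi)) (by simp) (by simp)
  · rw [dif_pos hi, dif_neg hj]
    simp only [Matrix.fromBlocks_apply₁₂, Matrix.of_apply]
    rw [dif_neg (show ¬ i = j from fun hc => hj (by rw [← hc]; exact hi))]
    by_cases hj1 : (j : ℕ) = 1
    · rw [dif_pos (show (i : ℕ) + 1 = (j : ℕ) by omega),
        dif_pos (show (⟨(j : ℕ) - 1, by have := j.isLt; omega⟩ : Fin (l+1)) = 0 from Fin.ext (by simp; omega))]
      exact fam2_congr Z (Fin.ext (by simp only [Fin.val_mk, Fin.val_zero, Fin.val_natCast, Nat.zero_mod, Fin.coe_castSucc, Fin.val_succ] at *; omega)) rfl rfl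
    · rw [dif_neg (show ¬ (i : ℕ) + 1 = (j : ℕ) by omega),
        dif_neg (show ¬ (⟨(j : ℕ) - 1, by have := j.isLt; omega⟩ : Fin (l+1)) = 0 from
          fun hc => hj1 (by have := congrArg Fin.val hc; simp at this; omega))]
  · rw [dif_neg hi, dif_pos hj]
    simp only [Matrix.fromBlocks_apply₂₁, Matrix.zero_apply]
    rw [dif_neg (show ¬ i = j from fun hc => hi (by rw [hc]; exact hj)),
      dif_neg (show ¬ (i : ℕ) + 1 = (j : ℕ) by omega)]
  · rw [dif_neg hi, dif_neg hj]
    simp only [Matrix.fromBlocks_apply₂₂, Matrix.of_apply]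
    by_cases hij : (i : ℕ) = (j : ℕ)
    · rw [dif_pos (show i = j from Fin.ext hij),
        dif_pos (show (⟨(i : ℕ) - 1, by have := i.isLt; omega⟩ : Fin (l+1)) = ⟨(j : ℕ) - 1, _⟩ from
          Fin.ext (by simp; omega))]
      exact fam2_congr X (Fin.ext (by simp; omega)) (by simp) (by simp)
    · rw [dif_neg (show ¬ i = j from fun hc => hij (congrArg Fin.val hc)),
        dif_neg (show ¬ (⟨(i : ℕ) - 1, by have := i.isLt; omega⟩ : Fin (l+1)) = ⟨(j : ℕ) - 1, _⟩ from
          fun hc => hij (by have := congrArg Fin.val hc; simp at this; omega))]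
      by_cases hij2 : (i : ℕ) + 1 = (j : ℕ)
      · rw [dif_pos hij2,
          dif_pos (show ((⟨(i : ℕ) - 1, by have := i.isLt; omega⟩ : Fin (l+1)) : ℕ) + 1
            = ((⟨(j : ℕ) - 1, by have := j.isLt; omega⟩ : Fin (l+1)) : ℕ) by simp; omega)]
        exact fam2_congr Z (Fin.ext (by simp; omega)) (by simp) (by simp)
      · rw [dif_neg hij2,
          dif_neg (show ¬ ((⟨(i : ℕ) - 1, by have := i.isLt; omega⟩ : Fin (l+1)) : ℕ) + 1
            = ((⟨(j : ℕ) - 1, by have := j.isLt; omega⟩ : Fin (l+1)) : ℕ) by simp; omega)]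

end Step

/-- Bidiagonal matrices with diagonal blocks in `Ω` lie in `Ω`. -/
theorem bidiag_mem_aux
    (Ω : ∀ n : ℕ, Set (Matrix (Fin n) (Fin n) M))
    (hsi : SimInvariant R Ω) (hra : RightAdmissible R Ω) :
    ∀ (l : ℕ) (n : Fin (l + 1) → ℕ)
      (X : ∀ i : Fin (l + 1), Matrix (Fin (n i)) (Fin (n i)) M)
      (Z : ∀ i : Fin l, Matrix (Fin (n i.castSucc)) (Fin (n i.succ)) M),
      (∀ i, X i ∈ Ω (n i)) → bidiagF n X Z ∈ Ω (∑ i, n i) := by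
  intro l
  induction l with
  | zero =>
    intro n X Z hX
    have h := equiv_mem_aux (R := R) Ω hsi ((sigmaFin n).symm.trans sigmaOne) (X 0) (hX 0)
    have heq : bidiagF n X Z = (X 0).submatrix ((sigmaFin n).symm.trans sigmaOne)
        ((sigmaFin n).symm.trans sigmaOne) := by
      ext u v
      simp only [bidiagF, Matrix.reindex_apply, Matrix.submatrix_apply,
        Equiv.trans_apply]
      obtain ⟨i, x⟩ := (sigmaFin n).symm u
      obtain ⟨j, y⟩ := (sigmaFin n).symm v
      obtain rfl : i = 0 := Fin.ext (by have := i.isLt; omega)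
      obtain rfl : j = 0 := Fin.ext (by have := j.isLt; omega)
      simp only [bidiagS, Matrix.of_apply, dif_pos rfl]
      exact fam2_congr X rfl (by simp [sigmaOne]) (by simp [sigmaOne])
    rw [heq]; exact h
  | succ l ih =>
    intro n X Z hX
    set n' : Fin (l + 1) → ℕ := fun i => n i.succ with hn'
    set X' : ∀ i : Fin (l + 1), Matrix (Fin (n' i)) (Fin (n' i)) M :=
      fun i => X i.succ with hX'
    set Z' : ∀ i : Fin l, Matrix (Fin (n' i.castSucc)) (Fin (n' i.succ)) M :=
      fun i => Z i.succ with hZ'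
    have hB' : bidiagF n' X' Z' ∈ Ω (∑ i, n' i) := ih n' X' Z' (fun i => hX i.succ)
    set K' : ℕ := ∑ i, n' i with hK'
    set ZF : Matrix (Fin (n 0)) (Fin K') M :=
      (hatZS n Z).submatrix id (sigmaFin n').symm with hZF
    obtain ⟨r, hr⟩ := hra (n 0) K' (X 0) (bidiagF n' X' Z') ZF (hX 0) hB'
    set e : (Fin (n 0) ⊕ Fin K') ≃ Fin (n 0 + K') := finSumFinEquiv with he
    set S : Matrix (Fin (n 0 + K')) (Fin (n 0 + K')) R :=
      (Matrix.fromBlocks (((r⁻¹ : Rˣ) : R) • 1) 0 0 1).submatrix e.symm e.symm with hS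
    set S' : Matrix (Fin (n 0 + K')) (Fin (n 0 + K')) R :=
      (Matrix.fromBlocks ((r : R) • 1) 0 0 1).submatrix e.symm e.symm with hS'
    have hSS' : S * S' = 1 := by
      rw [hS, hS', Matrix.submatrix_mul_equiv, Matrix.fromBlocks_multiply]
      simp [Matrix.smul_mul, Matrix.mul_smul, smul_smul, Units.inv_mul,
        Matrix.submatrix_one_equiv]
    have hS'S : S' * S = 1 := by
      rw [hS, hS', Matrix.submatrix_mul_equiv, Matrix.fromBlocks_multiply]
      simp [Matrix.smul_mul, Matrix.mul_smul, smul_smul, Units.mul_inv,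
        Matrix.submatrix_one_equiv]
    have hconj : scalMul S (mulScal (upTri (X 0) ((r : R) • ZF) (bidiagF n' X' Z')) S')
        = upTri (X 0) ZF (bidiagF n' X' Z') := by
      rw [scalMul_eq_sMul, mulScal_eq_mSc]
      show sMul S (mSc ((Matrix.fromBlocks (X 0) ((r:R) • ZF) 0
        (bidiagF n' X' Z')).submatrix e.symm e.symm) S') = _
      rw [hS, hS', mSc_submatrix _ _ _ e.symm _, sMul_submatrix _ _ _ e.symm _,
        mSc_fromBlocks, sMul_fromBlocks]
      show _ = (Matrix.fromBlocks (X 0) ZF 0 (bidiagF n' X' Z')).submatrix e.symm e.symm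
      congr 1
      simp only [mSc_smul_one, mSc_zero, zero_mSc, mSc_one, sMul_smul_one,
        sMul_zero, zero_sMul, sMul_one, add_zero, zero_add, smul_smul,
        Units.inv_mul, one_smul, smul_zero]
    have hmem2 := hsi (n 0 + K') _ S S' hr hSS' hS'S
    rw [hconj] at hmem2
    set g : Fin (∑ i, n i) ≃ Fin (n 0 + K') :=
      (sigmaFin n).symm.trans ((splitSig n).trans
        ((Equiv.sumCongr (Equiv.refl (Fin (n 0))) (sigmaFin n')).trans e)) with hg
    have h := equiv_mem_aux (R := R) Ω hsi g _ hmem2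
    have heq : bidiagF n X Z =
        (upTri (X 0) ZF (bidiagF n' X' Z')).submatrix g g := by
      ext u v
      show bidiagS n X Z ((sigmaFin n).symm u) ((sigmaFin n).symm v) =
        (Matrix.fromBlocks (X 0) ZF 0 (bidiagF n' X' Z')) (e.symm (g u)) (e.symm (g v))
      rw [bidiagS_split n X Z]
      have hgu : ∀ w, e.symm (g w) = (Equiv.sumCongr (Equiv.refl (Fin (n 0)))
          (sigmaFin n')) (splitSig n ((sigmaFin n).symm w)) := by
        intro w
        simp [hg, Equiv.trans_apply]
      rw [hgu u, hgu v]
      rcases splitSig n ((sigmaFin n).symm u) with x | w <;>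
        rcases splitSig n ((sigmaFin n).symm v) with y | w' <;>
        simp [hZF, Matrix.fromBlocks, bidiagF] <;> rfl
    rw [heq]
    exact h

end NCAux4
section NCAux5

variable {R : Type*} [CommRing R] {M : Type*} [AddCommGroup M] [Module R M]
  {N : Type*} [AddCommGroup N] [Module R N]

theorem ltrunc_aux
    (Ω : ∀ n : ℕ, Set (Matrix (Fin n) (Fin n) M))
    (f : ∀ n : ℕ, Matrix (Fin n) (Fin n) M → Matrix (Fin n) (Fin n) N)
    (hΩ : IsNCSet Ω) (hsi : SimInvariant R Ω) (hra : RightAdmissible R Ω)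
    (hds : RespectsDirSums Ω f) (hsim : RespectsSim R Ω f)
    {l l' a : ℕ} (hal : a + l' = l)
    (n : Fin (l + 1) → ℕ) (n' : Fin (l' + 1) → ℕ)
    (X : ∀ i : Fin (l + 1), Matrix (Fin (n i)) (Fin (n i)) M)
    (Z : ∀ i : Fin l, Matrix (Fin (n i.castSucc)) (Fin (n i.succ)) M)
    (X' : ∀ i : Fin (l' + 1), Matrix (Fin (n' i)) (Fin (n' i)) M)
    (Z' : ∀ i : Fin l', Matrix (Fin (n' i.castSucc)) (Fin (n' i.succ)) M)
    (hn : ∀ t, n' t = n (embF a hal.le t))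
    (hX' : ∀ t p q, X' t p q =
      X (embF a hal.le t) (Fin.cast (hn t) p) (Fin.cast (hn t) q))
    (hZ' : ∀ (t : Fin l') p q, Z' t p q =
      Z (embZF a hal.le t) (Fin.cast (hn t.castSucc) p) (Fin.cast (hn t.succ) q))
    (hXmem : ∀ i, X i ∈ Ω (n i)) :
    (∀ (s t : Fin (l' + 1)) (p : Fin (n' s)) (q : Fin (n' t)),
      f (∑ i, n' i) (bidiagF n' X' Z') (sigmaFin n' ⟨s, p⟩) (sigmaFin n' ⟨t, q⟩) =
        f (∑ i, n i) (bidiagF n X Z)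
          (sigmaFin n ⟨embF a hal.le s, Fin.cast (hn s) p⟩)
          (sigmaFin n ⟨embF a hal.le t, Fin.cast (hn t) q⟩)) ∧
    (∀ (s : Fin (l' + 1)) (p : Fin (n' s)) (j : Fin (l + 1)) (y : Fin (n j)),
      (j : ℕ) < a →
      f (∑ i, n i) (bidiagF n X Z)
        (sigmaFin n ⟨embF a hal.le s, Fin.cast (hn s) p⟩) (sigmaFin n ⟨j, y⟩) = 0) := by
  classical
  set eF := sigmaFin n with heF
  set eS := sigmaFin n' with heS
  have hX'mem : ∀ t, X' t ∈ Ω (n' t) := by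
    intro t
    have hxe : X' t = (X (embF a hal.le t)).submatrix (finCongr (hn t))
        (finCongr (hn t)) := by
      ext p q; rw [hX']; rfl
    rw [hxe]
    exact equiv_mem_aux (R := R) Ω hsi (finCongr (hn t)) _ (hXmem _)
  have hBmem := bidiag_mem_aux Ω hsi hra l n X Z hXmem
  have hB'mem := bidiag_mem_aux Ω hsi hra l' n' X' Z' hX'mem
  set ι : ((t : Fin (l' + 1)) × Fin (n' t)) → ((i : Fin (l + 1)) × Fin (n i)) :=
    fun u => ⟨embF a hal.le u.1, Fin.cast (hn u.1) u.2⟩ with hι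
  have hinj : ∀ u1 u2, ι u1 = ι u2 → u1 = u2 := by
    rintro ⟨c1, d1⟩ ⟨c2, d2⟩ h
    obtain ⟨h1, h2⟩ := sigma_mk_eq_iff.mp h
    simp only [embF, hι] at h1 h2
    exact sigma_pt (by omega) h2
  set T : Matrix (Fin (∑ i, n' i)) (Fin (∑ i, n i)) R :=
    Matrix.of (fun u v => if eF.symm v = ι (eS.symm u) then 1 else 0) with hT
  have hint : mulScal (bidiagF n' X' Z') T = scalMul T (bidiagF n X Z) := by
    ext u v
    obtain ⟨⟨s, p⟩, rfl⟩ : ∃ w, u = eS w := ⟨eS.symm u, (eS.apply_symm_apply u).symm⟩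
    obtain ⟨⟨j, y⟩, rfl⟩ : ∃ w, v = eF w := ⟨eF.symm v, (eF.apply_symm_apply v).symm⟩
    rw [mulScal_eq_mSc, scalMul_eq_sMul]
    simp only [mSc, sMul, Matrix.of_apply, hT, Equiv.symm_apply_apply]
    rw [sum_indicator_smul (R := R) (fun k => bidiagF n X Z k (eF ⟨j, y⟩))
      (fun k => eF.symm k = ι ⟨s, p⟩) (eF (ι ⟨s, p⟩))
      (fun w => Equiv.symm_apply_eq eF)]
    by_cases hj : a ≤ (j : ℕ)
    · set tj : Fin (l' + 1) := ⟨(j : ℕ) - a, by have := j.isLt; omega⟩ with htj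
      have hpf : n j = n' tj := by
        rw [hn tj]
        congr 1
        apply Fin.ext
        simp only [embF, htj]
        omega
      have hjρ : (⟨j, y⟩ : (i : Fin (l + 1)) × Fin (n i)) = ι ⟨tj, Fin.cast hpf y⟩ :=
        sigma_pt (by simp [embF, htj, hι]; omega) (by simp)
      rw [sum_indicator_smul (R := R)
        (fun k => bidiagF n' X' Z' (eS ⟨s, p⟩) k)
        (fun k => (⟨j, y⟩ : (i : Fin (l + 1)) × Fin (n i)) = ι (eS.symm k))
        (eS ⟨tj, Fin.cast hpf y⟩)
        (fun w => by
          constructor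
          · intro hc
            have h2 := hinj _ _ ((hjρ.symm.trans hc))
            exact (Equiv.symm_apply_eq eS).mp h2.symm
          · intro hw
            subst hw
            simpa using hjρ)]
      simp only [bidiagF, Matrix.reindex_apply, Matrix.submatrix_apply,
        Equiv.symm_apply_apply, heF, heS]
      rw [hjρ]
      exact (core1 hal.le n n' X Z X' Z' hn hX' hZ' s tj p (Fin.cast hpf y)).symm
    · rw [sum_indicator_smul_zero (R := R) _ _ (fun w hc => by
        have h1 := (sigma_mk_eq_iff.mp hc).1
        simp only [embF, hι] at h1
        omega)]
      simp only [bidiagF, Matrix.reindex_apply, Matrix.submatrix_apply,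
        Equiv.symm_apply_apply, heF, heS]
      exact (core2 hal.le n X Z (by omega) s (Fin.cast (hn s) p) y).symm
  have hfint := intertwine_aux Ω f hΩ hds hsim (∑ i, n' i) (∑ i, n i)
    (bidiagF n' X' Z') (bidiagF n X Z) T hB'mem hBmem hint
  rw [mulScal_eq_mSc, scalMul_eq_sMul] at hfint
  constructor
  · intro s t p q
    have h := congrFun (congrFun hfint (eS ⟨s, p⟩)) (eF (ι ⟨t, q⟩))
    simp only [mSc, sMul, Matrix.of_apply, hT, Equiv.symm_apply_apply] at h
    rw [sum_indicator_smul (R := R)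
      (fun k => f (∑ i, n' i) (bidiagF n' X' Z') (eS ⟨s, p⟩) k)
      (fun k => ι ⟨t, q⟩ = ι (eS.symm k)) (eS ⟨t, q⟩)
      (fun w => ⟨fun hc => (Equiv.symm_apply_eq eS).mp (hinj _ _ hc).symm,
        fun hw => by subst hw; simp⟩),
      sum_indicator_smul (R := R)
      (fun k => f (∑ i, n i) (bidiagF n X Z) k (eF (ι ⟨t, q⟩)))
      (fun k => eF.symm k = ι ⟨s, p⟩) (eF (ι ⟨s, p⟩))
      (fun w => Equiv.symm_apply_eq eF)] at h
    exact h
  · intro s p j y hj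
    have h := congrFun (congrFun hfint (eS ⟨s, p⟩)) (eF ⟨j, y⟩)
    simp only [mSc, sMul, Matrix.of_apply, hT, Equiv.symm_apply_apply] at h
    rw [sum_indicator_smul_zero (R := R) _ _ (fun w hc => by
        have h1 := (sigma_mk_eq_iff.mp hc).1
        simp only [embF, hι] at h1
        omega),
      sum_indicator_smul (R := R)
      (fun k => f (∑ i, n i) (bidiagF n X Z) k (eF ⟨j, y⟩))
      (fun k => eF.symm k = ι ⟨s, p⟩) (eF (ι ⟨s, p⟩))
      (fun w => Equiv.symm_apply_eq eF)] at h
    exact h.symm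

end NCAux5
section NCAux6

variable {R : Type*} [CommRing R] {M : Type*} [AddCommGroup M] [Module R M]
  {N : Type*} [AddCommGroup N] [Module R N]

theorem rtrunc_aux
    (Ω : ∀ n : ℕ, Set (Matrix (Fin n) (Fin n) M))
    (f : ∀ n : ℕ, Matrix (Fin n) (Fin n) M → Matrix (Fin n) (Fin n) N)
    (hΩ : IsNCSet Ω) (hsi : SimInvariant R Ω) (hra : RightAdmissible R Ω)
    (hds : RespectsDirSums Ω f) (hsim : RespectsSim R Ω f)
    {l l' : ℕ} (hal : 0 + l' ≤ l)
    (n : Fin (l + 1) → ℕ) (n' : Fin (l' + 1) → ℕ)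
    (X : ∀ i : Fin (l + 1), Matrix (Fin (n i)) (Fin (n i)) M)
    (Z : ∀ i : Fin l, Matrix (Fin (n i.castSucc)) (Fin (n i.succ)) M)
    (X' : ∀ i : Fin (l' + 1), Matrix (Fin (n' i)) (Fin (n' i)) M)
    (Z' : ∀ i : Fin l', Matrix (Fin (n' i.castSucc)) (Fin (n' i.succ)) M)
    (hn : ∀ t, n' t = n (embF 0 hal t))
    (hX' : ∀ t p q, X' t p q =
      X (embF 0 hal t) (Fin.cast (hn t) p) (Fin.cast (hn t) q))
    (hZ' : ∀ (t : Fin l') p q, Z' t p q =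
      Z (embZF 0 hal t) (Fin.cast (hn t.castSucc) p) (Fin.cast (hn t.succ) q))
    (hXmem : ∀ i, X i ∈ Ω (n i)) :
    ∀ (s t : Fin (l' + 1)) (p : Fin (n' s)) (q : Fin (n' t)),
      f (∑ i, n i) (bidiagF n X Z)
          (sigmaFin n ⟨embF 0 hal s, Fin.cast (hn s) p⟩)
          (sigmaFin n ⟨embF 0 hal t, Fin.cast (hn t) q⟩) =
        f (∑ i, n' i) (bidiagF n' X' Z') (sigmaFin n' ⟨s, p⟩) (sigmaFin n' ⟨t, q⟩) := by
  classical
  set eF := sigmaFin n with heF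
  set eS := sigmaFin n' with heS
  have hX'mem : ∀ t, X' t ∈ Ω (n' t) := by
    intro t
    have hxe : X' t = (X (embF 0 hal t)).submatrix (finCongr (hn t))
        (finCongr (hn t)) := by
      ext p q; rw [hX']; rfl
    rw [hxe]
    exact equiv_mem_aux (R := R) Ω hsi (finCongr (hn t)) _ (hXmem _)
  have hBmem := bidiag_mem_aux Ω hsi hra l n X Z hXmem
  have hB'mem := bidiag_mem_aux Ω hsi hra l' n' X' Z' hX'mem
  set ι : ((t : Fin (l' + 1)) × Fin (n' t)) → ((i : Fin (l + 1)) × Fin (n i)) :=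
    fun u => ⟨embF 0 hal u.1, Fin.cast (hn u.1) u.2⟩ with hι
  have hinj : ∀ u1 u2, ι u1 = ι u2 → u1 = u2 := by
    rintro ⟨c1, d1⟩ ⟨c2, d2⟩ h
    obtain ⟨h1, h2⟩ := sigma_mk_eq_iff.mp h
    simp only [embF, hι] at h1 h2
    exact sigma_pt (by omega) h2
  set T : Matrix (Fin (∑ i, n i)) (Fin (∑ i, n' i)) R :=
    Matrix.of (fun v u => if eF.symm v = ι (eS.symm u) then 1 else 0) with hT
  have hint : mulScal (bidiagF n X Z) T = scalMul T (bidiagF n' X' Z') := by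
    ext u v
    obtain ⟨⟨i, x⟩, rfl⟩ : ∃ w, u = eF w := ⟨eF.symm u, (eF.apply_symm_apply u).symm⟩
    obtain ⟨⟨t, q⟩, rfl⟩ : ∃ w, v = eS w := ⟨eS.symm v, (eS.apply_symm_apply v).symm⟩
    rw [mulScal_eq_mSc, scalMul_eq_sMul]
    simp only [mSc, sMul, Matrix.of_apply, hT, Equiv.symm_apply_apply]
    rw [sum_indicator_smul (R := R) (fun k => bidiagF n X Z (eF ⟨i, x⟩) k)
      (fun k => eF.symm k = ι ⟨t, q⟩) (eF (ι ⟨t, q⟩))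
      (fun w => Equiv.symm_apply_eq eF)]
    by_cases hi : (i : ℕ) ≤ l'
    · set ti : Fin (l' + 1) := ⟨(i : ℕ), by omega⟩ with hti
      have hpf : n i = n' ti := by
        rw [hn ti]
        congr 1
        apply Fin.ext
        simp only [embF, hti]
        omega
      have hiρ : (⟨i, x⟩ : (i : Fin (l + 1)) × Fin (n i)) = ι ⟨ti, Fin.cast hpf x⟩ :=
        sigma_pt (by simp only [embF, hti, hι]; omega) (by simp)
      rw [sum_indicator_smul (R := R)
        (fun k => bidiagF n' X' Z' k (eS ⟨t, q⟩))
        (fun k => (⟨i, x⟩ : (i : Fin (l + 1)) × Fin (n i)) = ι (eS.symm k))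
        (eS ⟨ti, Fin.cast hpf x⟩)
        (fun w => by
          constructor
          · intro hc
            have h2 := hinj _ _ ((hiρ.symm.trans hc))
            exact (Equiv.symm_apply_eq eS).mp h2.symm
          · intro hw
            subst hw
            simpa using hiρ)]
      simp only [bidiagF, Matrix.reindex_apply, Matrix.submatrix_apply,
        Equiv.symm_apply_apply, heF, heS]
      rw [hiρ]
      exact core1 hal n n' X Z X' Z' hn hX' hZ' ti t (Fin.cast hpf x) q
    · rw [sum_indicator_smul_zero (R := R) _ _ (fun w hc => by
        have h1 := (sigma_mk_eq_iff.mp hc).1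
        simp only [embF, hι] at h1
        have := (eS.symm w).1.isLt
        omega)]
      simp only [bidiagF, Matrix.reindex_apply, Matrix.submatrix_apply,
        Equiv.symm_apply_apply, heF, heS]
      exact core3 hal n X Z (by omega) t x (Fin.cast (hn t) q)
  have hfint := intertwine_aux Ω f hΩ hds hsim (∑ i, n i) (∑ i, n' i)
    (bidiagF n X Z) (bidiagF n' X' Z') T hBmem hB'mem hint
  rw [mulScal_eq_mSc, scalMul_eq_sMul] at hfint
  intro s t p q
  have h := congrFun (congrFun hfint (eF (ι ⟨s, p⟩))) (eS ⟨t, q⟩)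
  simp only [mSc, sMul, Matrix.of_apply, hT, Equiv.symm_apply_apply] at h
  rw [sum_indicator_smul (R := R)
    (fun k => f (∑ i, n i) (bidiagF n X Z) (eF (ι ⟨s, p⟩)) k)
    (fun k => eF.symm k = ι ⟨t, q⟩) (eF (ι ⟨t, q⟩))
    (fun w => Equiv.symm_apply_eq eF),
    sum_indicator_smul (R := R)
    (fun k => f (∑ i, n' i) (bidiagF n' X' Z') k (eS ⟨t, q⟩))
    (fun k => ι ⟨s, p⟩ = ι (eS.symm k)) (eS ⟨s, p⟩)
    (fun w => ⟨fun hc => (Equiv.symm_apply_eq eS).mp (hinj _ _ hc).symm,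
      fun hw => by subst hw; simp⟩)] at h
  exact h

theorem bidiag_zero_f
    (Ω : ∀ n : ℕ, Set (Matrix (Fin n) (Fin n) M))
    (f : ∀ n : ℕ, Matrix (Fin n) (Fin n) M → Matrix (Fin n) (Fin n) N)
    (hsi : SimInvariant R Ω) (hsim : RespectsSim R Ω f)
    {n : Fin 1 → ℕ}
    (X : ∀ i : Fin 1, Matrix (Fin (n i)) (Fin (n i)) M)
    (Z : ∀ i : Fin 0, Matrix (Fin (n i.castSucc)) (Fin (n i.succ)) M)
    (hXmem : ∀ i, X i ∈ Ω (n i)) (u v : Fin (∑ i, n i)) :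
    f (∑ i, n i) (bidiagF n X Z) u v =
      f (n 0) (X 0) (sigmaOne ((sigmaFin n).symm u)) (sigmaOne ((sigmaFin n).symm v)) := by
  set g : Fin (∑ i, n i) ≃ Fin (n 0) := (sigmaFin n).symm.trans sigmaOne with hg
  have heq : bidiagF n X Z = (X 0).submatrix g g := by
    ext u' v'
    simp only [bidiagF, Matrix.reindex_apply, Matrix.submatrix_apply,
      Equiv.trans_apply, hg]
    obtain ⟨i, x⟩ := (sigmaFin n).symm u'
    obtain ⟨j, y⟩ := (sigmaFin n).symm v'
    obtain rfl : i = 0 := Fin.ext (by have := i.isLt; omega)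
    obtain rfl : j = 0 := Fin.ext (by have := j.isLt; omega)
    simp only [bidiagS, Matrix.of_apply, dif_pos rfl]
    exact fam2_congr X rfl (by simp [sigmaOne]) (by simp [sigmaOne])
  rw [heq, equiv_conj_aux Ω f hsi hsim g (X 0) (hXmem 0)]
  rfl

theorem corner_aux
    (Ω : ∀ n : ℕ, Set (Matrix (Fin n) (Fin n) M))
    (f : ∀ n : ℕ, Matrix (Fin n) (Fin n) M → Matrix (Fin n) (Fin n) N)
    (hΩ : IsNCSet Ω) (hsi : SimInvariant R Ω) (hra : RightAdmissible R Ω)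
    (hds : RespectsDirSums Ω f) (hsim : RespectsSim R Ω f)
    {l : ℕ} (n : Fin (l + 1) → ℕ)
    (X : ∀ i : Fin (l + 1), Matrix (Fin (n i)) (Fin (n i)) M)
    (Z : ∀ i : Fin l, Matrix (Fin (n i.castSucc)) (Fin (n i.succ)) M)
    (hXmem : ∀ i, X i ∈ Ω (n i))
    (p q : Fin (n ⟨0, Nat.succ_pos l⟩)) :
    f (∑ i, n i) (bidiagF n X Z)
        (sigmaFin n ⟨⟨0, Nat.succ_pos l⟩, p⟩) (sigmaFin n ⟨⟨0, Nat.succ_pos l⟩, q⟩) =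
      f (n ⟨0, Nat.succ_pos l⟩) (X ⟨0, Nat.succ_pos l⟩) p q := by
  have hal : 0 + 0 ≤ l := by omega
  set n' : Fin 1 → ℕ := fun t => n (embF 0 hal t) with hn'
  set X' : ∀ i : Fin 1, Matrix (Fin (n' i)) (Fin (n' i)) M :=
    fun t => X (embF 0 hal t) with hX'd
  set Z' : ∀ i : Fin 0, Matrix (Fin (n' i.castSucc)) (Fin (n' i.succ)) M :=
    fun t => t.elim0 with hZ'd
  have hn : ∀ t, n' t = n (embF 0 hal t) := fun t => rfl
  have hX' : ∀ t p' q', X' t p' q' =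
      X (embF 0 hal t) (Fin.cast (hn t) p') (Fin.cast (hn t) q') := fun t p' q' => rfl
  have hZ' : ∀ (t : Fin 0) p' q', Z' t p' q' =
      Z (embZF 0 hal t) (Fin.cast (hn t.castSucc) p') (Fin.cast (hn t.succ) q') :=
    fun t => t.elim0
  have h1 := rtrunc_aux Ω f hΩ hsi hra hds hsim hal n n' X Z X' Z' hn hX' hZ'
    hXmem ⟨0, Nat.one_pos⟩ ⟨0, Nat.one_pos⟩ p q
  have hX'mem : ∀ t, X' t ∈ Ω (n' t) := fun t => hXmem _
  have h2 := bidiag_zero_f Ω f hsi hsim X' Z' hX'mem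
    (sigmaFin n' ⟨⟨0, Nat.one_pos⟩, p⟩) (sigmaFin n' ⟨⟨0, Nat.one_pos⟩, q⟩)
  rw [h2] at h1
  simp only [Equiv.symm_apply_apply] at h1
  exact h1

end NCAux6

/-- For a nc function `f` on a similarity invariant right admissible
nc set `Ω` and `X^i ∈ Ω_{n_i}`, the bidiagonal matrix `B` lies in `Ω`, `f(B)` is block
upper triangular with diagonal blocks `f(X^i)`, and its `(a, b)` block (for `a < b`) is
the upper right corner block of `f` applied to the sub-bidiagonal matrix built from
`X^a, …, X^b` and `Z^a, …, Z^{b-1}`. -/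
theorem nc_function_on_bidiagonal
    {R : Type*} [CommRing R] {M : Type*} [AddCommGroup M] [Module R M]
    {N : Type*} [AddCommGroup N] [Module R N]
    (Ω : ∀ n : ℕ, Set (Matrix (Fin n) (Fin n) M))
    (f : ∀ n : ℕ, Matrix (Fin n) (Fin n) M → Matrix (Fin n) (Fin n) N)
    (hΩ : IsNCSet Ω) (hsi : SimInvariant R Ω) (hra : RightAdmissible R Ω)
    (hds : RespectsDirSums Ω f) (hsim : RespectsSim R Ω f)
    {l : ℕ} (n : Fin (l + 1) → ℕ)
    (X : ∀ i : Fin (l + 1), Matrix (Fin (n i)) (Fin (n i)) M)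
    (Z : ∀ i : Fin l, Matrix (Fin (n i.castSucc)) (Fin (n i.succ)) M)
    (hX : ∀ i, X i ∈ Ω (n i)) :
    bidiagF n X Z ∈ Ω (∑ i, n i) ∧
    (∀ a b : Fin (l + 1), (b : ℕ) < (a : ℕ) →
      blkS n a b (f (∑ i, n i) (bidiagF n X Z)) = 0) ∧
    (∀ a : Fin (l + 1),
      blkS n a a (f (∑ i, n i) (bidiagF n X Z)) = f (n a) (X a)) ∧
    (∀ a b : Fin (l + 1), ∀ hab : (a : ℕ) < (b : ℕ),
      blkS n a b (f (∑ i, n i) (bidiagF n X Z)) =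
        (blkS (fun t => n (subIdx hab.le t)) ⟨0, by omega⟩ (Fin.last ((b : ℕ) - (a : ℕ)))
          (f (∑ t, n (subIdx hab.le t))
            (bidiagF (fun t => n (subIdx hab.le t)) (fun t => X (subIdx hab.le t))
              (fun t =>
                (Z ⟨(a : ℕ) + (t : ℕ), by have := t.isLt; have := b.isLt; omega⟩).submatrix
                  (Fin.cast (by apply congrArg n; apply Fin.ext; simp [subIdx]))
                  (Fin.cast (by apply congrArg n; apply Fin.ext; simp [subIdx]; omega)))))
        ).submatrix
          (Fin.cast (by apply congrArg n; apply Fin.ext; simp [subIdx]))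
          (Fin.cast (by apply congrArg n; apply Fin.ext; simp [subIdx]; omega))) := by
  have haux : ∀ a : Fin (l + 1), True := fun _ => trivial
  refine ⟨bidiag_mem_aux Ω hsi hra l n X Z hX, ?_, ?_, ?_⟩
  · -- zero blocks below the diagonal
    intro a b hba
    have hal₁ : (a : ℕ) + (l - (a : ℕ)) = l := by have := a.isLt; omega
    set n₁ : Fin (l - (a : ℕ) + 1) → ℕ := fun t => n (embF (a : ℕ) hal₁.le t) with hn₁d
    set X₁ : ∀ t, Matrix (Fin (n₁ t)) (Fin (n₁ t)) M :=
      fun t => X (embF (a : ℕ) hal₁.le t) with hX₁d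
    set Z₁ : ∀ t : Fin (l - (a : ℕ)), Matrix (Fin (n₁ t.castSucc)) (Fin (n₁ t.succ)) M :=
      fun t => Z (embZF (a : ℕ) hal₁.le t) with hZ₁d
    obtain ⟨hL1, hL2⟩ := ltrunc_aux Ω f hΩ hsi hra hds hsim hal₁ n n₁ X Z X₁ Z₁
      (fun t => rfl) (fun t p q => rfl) (fun t p q => rfl) hX
    ext p q
    simp only [blkS, Matrix.of_apply, Matrix.zero_apply]
    exact hL2 ⟨0, Nat.succ_pos _⟩ p b q hba
  · -- diagonal blocks
    intro a
    have hal₁ : (a : ℕ) + (l - (a : ℕ)) = l := by have := a.isLt; omega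
    set n₁ : Fin (l - (a : ℕ) + 1) → ℕ := fun t => n (embF (a : ℕ) hal₁.le t) with hn₁d
    set X₁ : ∀ t, Matrix (Fin (n₁ t)) (Fin (n₁ t)) M :=
      fun t => X (embF (a : ℕ) hal₁.le t) with hX₁d
    set Z₁ : ∀ t : Fin (l - (a : ℕ)), Matrix (Fin (n₁ t.castSucc)) (Fin (n₁ t.succ)) M :=
      fun t => Z (embZF (a : ℕ) hal₁.le t) with hZ₁d
    obtain ⟨hL1, hL2⟩ := ltrunc_aux Ω f hΩ hsi hra hds hsim hal₁ n n₁ X Z X₁ Z₁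
      (fun t => rfl) (fun t p q => rfl) (fun t p q => rfl) hX
    ext p q
    simp only [blkS, Matrix.of_apply]
    have h1 := hL1 ⟨0, Nat.succ_pos _⟩ ⟨0, Nat.succ_pos _⟩ p q
    have h2 := corner_aux Ω f hΩ hsi hra hds hsim n₁ X₁ Z₁ (fun t => hX _) p q
    exact h1.symm.trans h2
  · -- blocks above the diagonal
    intro a b hab
    have hal₁ : (a : ℕ) + (l - (a : ℕ)) = l := by have := a.isLt; omega
    set n₁ : Fin (l - (a : ℕ) + 1) → ℕ := fun t => n (embF (a : ℕ) hal₁.le t) with hn₁d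
    set X₁ : ∀ t, Matrix (Fin (n₁ t)) (Fin (n₁ t)) M :=
      fun t => X (embF (a : ℕ) hal₁.le t) with hX₁d
    set Z₁ : ∀ t : Fin (l - (a : ℕ)), Matrix (Fin (n₁ t.castSucc)) (Fin (n₁ t.succ)) M :=
      fun t => Z (embZF (a : ℕ) hal₁.le t) with hZ₁d
    obtain ⟨hL1, hL2⟩ := ltrunc_aux Ω f hΩ hsi hra hds hsim hal₁ n n₁ X Z X₁ Z₁
      (fun t => rfl) (fun t p q => rfl) (fun t p q => rfl) hX
    have hal₂ : 0 + ((b : ℕ) - (a : ℕ)) ≤ l - (a : ℕ) := by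
      have := b.isLt; omega
    set n₂ : Fin ((b : ℕ) - (a : ℕ) + 1) → ℕ := fun t => n (subIdx hab.le t) with hn₂d
    set X₂ : ∀ t, Matrix (Fin (n₂ t)) (Fin (n₂ t)) M :=
      fun t => X (subIdx hab.le t) with hX₂d
    set Z₂ : ∀ t : Fin ((b : ℕ) - (a : ℕ)),
        Matrix (Fin (n₂ t.castSucc)) (Fin (n₂ t.succ)) M :=
      fun t =>
        (Z ⟨(a : ℕ) + (t : ℕ), by have := t.isLt; have := b.isLt; omega⟩).submatrix
          (Fin.cast (by apply congrArg n; apply Fin.ext; simp [subIdx]))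
          (Fin.cast (by apply congrArg n; apply Fin.ext; simp [subIdx]; omega)) with hZ₂d
    have hn₂ : ∀ t, n₂ t = n₁ (embF 0 hal₂ t) := by
      intro t
      apply congrArg n
      apply Fin.ext
      simp [subIdx, embF]
    have hX₂ : ∀ t p q, X₂ t p q =
        X₁ (embF 0 hal₂ t) (Fin.cast (hn₂ t) p) (Fin.cast (hn₂ t) q) := by
      intro t p q
      exact fam2_congr X (Fin.ext (by simp [subIdx, embF])) (by simp) (by simp)
    have hZ₂ : ∀ (t : Fin ((b : ℕ) - (a : ℕ))) p q, Z₂ t p q =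
        Z₁ (embZF 0 hal₂ t) (Fin.cast (hn₂ t.castSucc) p)
          (Fin.cast (hn₂ t.succ) q) := by
      intro t p q
      show Z _ (Fin.cast _ p) (Fin.cast _ q) = Z _ _ _
      exact fam2_congr Z (Fin.ext (by simp [embZF])) rfl rfl
    have h3 := rtrunc_aux Ω f hΩ hsi hra hds hsim hal₂ n₁ n₂ X₁ Z₁ X₂ Z₂ hn₂ hX₂ hZ₂
      (fun t => hX _)
    ext p q
    simp only [blkS, Matrix.of_apply, Matrix.submatrix_apply]
    -- key points
    set t₁ : Fin (l - (a : ℕ) + 1) := ⟨(b : ℕ) - (a : ℕ), by have := b.isLt; omega⟩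
      with ht₁
    have hqpf : n b = n₁ t₁ := by
      apply congrArg n
      apply Fin.ext
      simp [embF, ht₁]
      omega
    set q' : Fin (n₁ t₁) := Fin.cast hqpf q with hq'
    have h1 := hL1 ⟨0, Nat.succ_pos _⟩ t₁ p q'
    have hptb : (⟨embF (a : ℕ) hal₁.le t₁, Fin.cast ((fun t => rfl :
        ∀ t, n₁ t = n (embF (a : ℕ) hal₁.le t)) t₁) q'⟩ : (i : Fin (l + 1)) × Fin (n i))
        = ⟨b, q⟩ := sigma_pt (by simp [embF, ht₁]; omega) (by simp [hq'])
    have hptl : (⟨embF 0 hal₂ (Fin.last ((b : ℕ) - (a : ℕ))),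
        Fin.cast (hn₂ (Fin.last ((b : ℕ) - (a : ℕ)))) (Fin.cast (by
          apply congrArg n; apply Fin.ext; simp [subIdx]; omega : n b = n₂ (Fin.last _)) q)⟩ :
        (t : Fin (l - (a : ℕ) + 1)) × Fin (n₁ t)) = ⟨t₁, q'⟩ :=
      sigma_pt (by simp [embF, ht₁]) (by simp [hq'])
    have h3' := h3 ⟨0, Nat.succ_pos _⟩ (Fin.last ((b : ℕ) - (a : ℕ)))
      (Fin.cast (by apply congrArg n; apply Fin.ext; simp [subIdx] :
        n a = n₂ ⟨0, Nat.succ_pos _⟩) p)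
      (Fin.cast (by apply congrArg n; apply Fin.ext; simp [subIdx]; omega :
        n b = n₂ (Fin.last _)) q)
    rw [hptl] at h3'
    calc f (∑ i, n i) (bidiagF n X Z) (sigmaFin n ⟨a, p⟩) (sigmaFin n ⟨b, q⟩)
        = f (∑ i, n i) (bidiagF n X Z) (sigmaFin n ⟨a, p⟩)
            (sigmaFin n ⟨embF (a : ℕ) hal₁.le t₁, Fin.cast ((fun t => rfl :
              ∀ t, n₁ t = n (embF (a : ℕ) hal₁.le t)) t₁) q'⟩) := by
          exact congrArg (fun z => f (∑ i, n i) (bidiagF n X Z)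
            (sigmaFin n ⟨a, p⟩) (sigmaFin n z)) hptb.symm
      _ = f (∑ i, n₁ i) (bidiagF n₁ X₁ Z₁)
            (sigmaFin n₁ ⟨⟨0, Nat.succ_pos _⟩, p⟩) (sigmaFin n₁ ⟨t₁, q'⟩) := h1.symm
      _ = _ := h3'
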